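/- Let k be an algebraically closed field, n ≥ 1, b ≥ 1, and 1 ≤ c ≤ 2. Let B be a c × b matrix whose entries are homogeneous linear forms in k[x_0,…,x_n], and suppose that for every nonzero v ∈ k^{n+1} the evaluated matrix B(v) has rank c. Then the k-linear map from (S_1)^b to (S_2)^c sending a column vector u of linear forms to the column vector B·u of quadratic forms is surjective, where S_d denotes the space of homogeneous polynomials of degree d in k[x_0,…,x_n]. Equivalently, its kernel has k-dimension b(n+1) − c·(n+1)(n+2)/2. -/

import Mathlib

open MvPolynomial Module Submodule LinearMap Finsupp

section LinFormAux

variable {k : Type*} [Field k] {N : ℕ}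

/-- the linear form with coefficient vector `v` -/
noncomputable def linForm (v : Fin N → k) : MvPolynomial (Fin N) k :=
  ∑ i, MvPolynomial.C (v i) * MvPolynomial.X i

lemma linForm_isHomogeneous (v : Fin N → k) : (linForm v).IsHomogeneous 1 :=
  MvPolynomial.IsHomogeneous.sum _ _ _ fun i _ => isHomogeneous_C_mul_X (v i) i

lemma eval_linForm (v w : Fin N → k) : MvPolynomial.eval w (linForm v) = ∑ i, v i * w i := by
  simp [linForm]

lemma linForm_add (v w : Fin N → k) : linForm (v + w) = linForm v + linForm w := by
  simp [linForm, add_mul, Finset.sum_add_distrib]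

lemma linForm_smul (a : k) (v : Fin N → k) : linForm (a • v) = MvPolynomial.C a * linForm v := by
  simp [linForm, Finset.mul_sum, mul_assoc]

lemma linForm_sum {ι : Type*} (s : Finset ι) (f : ι → Fin N → k) :
    linForm (∑ i ∈ s, f i) = ∑ i ∈ s, linForm (f i) := by
  classical
  induction s using Finset.induction with
  | empty => simp [linForm]
  | insert _ _ h ih => simp_all [Finset.sum_insert h, linForm_add]

lemma linForm_single (a : Fin N) : linForm (Pi.single a (1:k)) = MvPolynomial.X a := by
  rw [linForm, Finset.sum_eq_single a]
  · simp
  · intro i _ hi; simp [Pi.single_apply, hi]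
  · simp

lemma Finsupp.degree_eq_card (d : Fin N →₀ ℕ) :
    Multiset.card (Finsupp.toMultiset d) = d.degree := by
  rw [Finsupp.card_toMultiset, Finsupp.degree, Finsupp.sum]
  rfl

lemma degree_eq_one_iff {d : Fin N →₀ ℕ} (h : d.degree = 1) :
    ∃ a, d = Finsupp.single a 1 := by
  have h1 : Multiset.card (Finsupp.toMultiset d) = 1 := by rw [Finsupp.degree_eq_card, h]
  obtain ⟨a, ha⟩ := Multiset.card_eq_one.mp h1
  exact ⟨a, by rw [← Finsupp.toMultiset_toFinsupp d, ha, Multiset.toFinsupp_singleton]⟩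

lemma degree_eq_two_iff {d : Fin N →₀ ℕ} (h : d.degree = 2) :
    ∃ a b, d = Finsupp.single a 1 + Finsupp.single b 1 := by
  have h1 : Multiset.card (Finsupp.toMultiset d) = 2 := by rw [Finsupp.degree_eq_card, h]
  obtain ⟨a, b, hab⟩ := Multiset.card_eq_two.mp h1
  refine ⟨a, b, ?_⟩
  have : ({a, b} : Multiset (Fin N)) = {a} + {b} := rfl
  rw [← Finsupp.toMultiset_toFinsupp d, hab, this, map_add, Multiset.toFinsupp_singleton,
    Multiset.toFinsupp_singleton]

lemma isHomog_mem_span_monomials {m : ℕ} {p : MvPolynomial (Fin N) k} (hp : p.IsHomogeneous m) :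
    p ∈ Submodule.span k {q : MvPolynomial (Fin N) k |
      ∃ d : Fin N →₀ ℕ, d.degree = m ∧ q = MvPolynomial.monomial d 1} := by
  rw [p.as_sum]
  refine Submodule.sum_mem _ fun d hd => ?_
  have h1 : (MvPolynomial.monomial d) (coeff d p) = coeff d p • (MvPolynomial.monomial d) 1 := by
    rw [MvPolynomial.smul_monomial, smul_eq_mul, mul_one]
  rw [h1]
  refine Submodule.smul_mem _ _ (Submodule.subset_span ⟨d, ?_, rfl⟩)
  have := hp (MvPolynomial.mem_support_iff.mp hd)
  rwa [Finsupp.degree_eq_weight_one]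

lemma exists_linForm {p : MvPolynomial (Fin N) k} (hp : p.IsHomogeneous 1) :
    ∃ v, linForm v = p := by
  have h1 : p ∈ Submodule.span k (Set.range (MvPolynomial.X : Fin N → MvPolynomial (Fin N) k)) := by
    refine Submodule.span_le.mpr ?_ (isHomog_mem_span_monomials hp)
    rintro q ⟨d, hd, rfl⟩
    obtain ⟨a, rfl⟩ := degree_eq_one_iff hd
    refine Submodule.subset_span ⟨a, ?_⟩
    rw [← MvPolynomial.X_pow_eq_monomial, pow_one]
  obtain ⟨c, hc⟩ := (mem_span_range_iff_exists_fun k).mp h1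
  exact ⟨c, by rw [← hc, linForm]; simp [MvPolynomial.smul_eq_C_mul]⟩

lemma isHomog_two_mem_span {p : MvPolynomial (Fin N) k} (hp : p.IsHomogeneous 2) :
    p ∈ Submodule.span k {q : MvPolynomial (Fin N) k |
      ∃ a b, q = MvPolynomial.X a * MvPolynomial.X b} := by
  refine Submodule.span_le.mpr ?_ (isHomog_mem_span_monomials hp)
  rintro q ⟨d, hd, rfl⟩
  obtain ⟨a, b, rfl⟩ := degree_eq_two_iff hd
  refine Submodule.subset_span ⟨a, b, ?_⟩
  rw [← mul_one (1:k), ← MvPolynomial.monomial_mul, ← MvPolynomial.X_pow_eq_monomial,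
    ← MvPolynomial.X_pow_eq_monomial, pow_one, pow_one]

end LinFormAux
section LAAux

variable {k : Type*} [Field k]

lemma span_top_of_dot {b N : ℕ} (cvec : Fin b → (Fin N → k))
    (H : ∀ v : Fin N → k, v ≠ 0 → ∃ j, ∑ i, cvec j i * v i ≠ 0) :
    Submodule.span k (Set.range cvec) = ⊤ := by
  by_contra hne
  obtain ⟨f, hf0, hfbot⟩ := Submodule.exists_dual_map_eq_bot_of_lt_top
    (lt_top_iff_ne_top.mpr hne) inferInstance
  set v : Fin N → k := fun i => f (Pi.single i 1) with hv
  have hfx : ∀ x : Fin N → k, f x = ∑ i, x i * v i := by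
    intro x
    conv_lhs => rw [← Finset.univ_sum_single x]
    rw [map_sum]
    refine Finset.sum_congr rfl fun i _ => ?_
    have : (Pi.single i (x i) : Fin N → k) = x i • (Pi.single i (1:k) : Fin N → k) := by
      ext j
      by_cases h : j = i <;> simp [Pi.single_apply, h]
    rw [this, map_smul, smul_eq_mul, hv]
  have hvne : v ≠ 0 := by
    intro h0
    apply hf0
    refine LinearMap.ext fun x => ?_
    rw [hfx x, h0]
    simp
  obtain ⟨j, hj⟩ := H v hvne
  apply hj
  rw [← hfx]
  have : f (cvec j) ∈ Submodule.map f (Submodule.span k (Set.range cvec)) :=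
    Submodule.mem_map_of_mem (Submodule.subset_span ⟨j, rfl⟩)
  rwa [hfbot, Submodule.mem_bot] at this

lemma vecMul_ne_zero_of_rank {c b : ℕ} (M : Matrix (Fin c) (Fin b) k) (h : M.rank = c)
    {lam : Fin c → k} (hl : lam ≠ 0) : Matrix.vecMul lam M ≠ 0 := by
  intro h0
  set MT := M.transpose with hMT
  have hker : lam ∈ LinearMap.ker (Matrix.mulVecLin MT) := by
    rw [LinearMap.mem_ker, Matrix.mulVecLin_apply, hMT, Matrix.mulVec_transpose, h0]
  have hrk : MT.rank = c := by rw [hMT, Matrix.rank_transpose, h]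
  have := LinearMap.finrank_range_add_finrank_ker (Matrix.mulVecLin MT)
  rw [Module.finrank_fin_fun] at this
  have hkerbot : LinearMap.ker (Matrix.mulVecLin MT) = ⊥ := by
    have hfk : Module.finrank k (LinearMap.ker (Matrix.mulVecLin MT)) = 0 := by
      have h2 : MT.rank = Module.finrank k (LinearMap.range (Matrix.mulVecLin MT)) := rfl
      omega
    exact Submodule.finrank_eq_zero.mp hfk
  rw [hkerbot, Submodule.mem_bot] at hker
  exact hl hker

variable {V : Type*} [AddCommGroup V] [Module k V] [FiniteDimensional k V]

open Module LinearMap Submodule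

lemma range_le_dualAnnihilator_ker (f : V →ₗ[k] Module.Dual k V)
    (hf : ∀ v w, f v w = f w v) :
    LinearMap.range f ≤ (LinearMap.ker f).dualAnnihilator := by
  rintro φ ⟨v, rfl⟩
  rw [Submodule.mem_dualAnnihilator]
  intro u hu
  rw [hf v u, LinearMap.mem_ker.mp hu]
  rfl

lemma range_eq_dualAnnihilator_ker (f : V →ₗ[k] Module.Dual k V)
    (hf : ∀ v w, f v w = f w v) :
    LinearMap.range f = (LinearMap.ker f).dualAnnihilator := by
  refine Submodule.eq_of_le_of_finrank_eq (range_le_dualAnnihilator_ker f hf) ?_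
  have h1 := LinearMap.finrank_range_add_finrank_ker f
  have h2 := Submodule.finrank_quotient_add_finrank (LinearMap.ker f)
  have h3 : finrank k (V ⧸ LinearMap.ker f)
      = finrank k (LinearMap.ker f).dualAnnihilator :=
    (Subspace.quotEquivAnnihilator (LinearMap.ker f)).finrank_eq
  omega

lemma pencil_lemma [IsAlgClosed k] (f g : V →ₗ[k] Module.Dual k V)
    (hf : ∀ v w, f v w = f w v) (hg : ∀ v w, g v w = g w v)
    (hker : LinearMap.ker g ≤ LinearMap.ker f) (hg0 : g ≠ 0) :
    ∃ (γ : k) (v : V), g v ≠ 0 ∧ f v = γ • g v := by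
  set p := LinearMap.ker g
  let gbar : (V ⧸ p) →ₗ[k] Module.Dual k V := p.liftQ g le_rfl
  let fbar : (V ⧸ p) →ₗ[k] Module.Dual k V := p.liftQ f hker
  have hginj : Function.Injective gbar :=
    LinearMap.ker_eq_bot.mp (Submodule.ker_liftQ_eq_bot _ _ _ le_rfl)
  have hrange : LinearMap.range fbar ≤ LinearMap.range gbar := by
    rw [Submodule.range_liftQ, Submodule.range_liftQ]
    calc LinearMap.range f ≤ (LinearMap.ker f).dualAnnihilator :=
          range_le_dualAnnihilator_ker f hf
      _ ≤ (LinearMap.ker g).dualAnnihilator := Submodule.dualAnnihilator_anti hker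
      _ = LinearMap.range g := (range_eq_dualAnnihilator_ker g hg).symm
  let E := LinearEquiv.ofInjective gbar hginj
  let e : (V ⧸ p) →ₗ[k] (V ⧸ p) :=
    E.symm.toLinearMap ∘ₗ (fbar.codRestrict (LinearMap.range gbar)
      (fun q => hrange (LinearMap.mem_range_self _ q)))
  have hkey : ∀ q, gbar (e q) = fbar q := by
    intro q
    show (gbar (E.symm ⟨fbar q, _⟩) : Module.Dual k V) = fbar q
    have : ∀ x : LinearMap.range gbar, gbar (E.symm x) = (x : Module.Dual k V) := by
      intro x
      have := E.apply_symm_apply x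
      calc gbar (E.symm x) = (E (E.symm x) : Module.Dual k V) := rfl
        _ = (x : Module.Dual k V) := by rw [this]
    exact this _
  have hplt : p < ⊤ := lt_top_iff_ne_top.mpr (fun h => hg0 (LinearMap.ker_eq_top.mp h))
  haveI : Nontrivial (V ⧸ p) := Submodule.Quotient.nontrivial_iff.mpr hplt.ne
  obtain ⟨γ, hγ⟩ := Module.End.exists_eigenvalue e
  obtain ⟨q, hq⟩ := hγ.exists_hasEigenvector
  obtain ⟨v, rfl⟩ := Submodule.mkQ_surjective p q
  refine ⟨γ, v, ?_, ?_⟩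
  all_goals
    have h2 : gbar (p.mkQ v) = g v := by
      rw [Submodule.mkQ_apply, Submodule.liftQ_apply]
    have h1 : fbar (p.mkQ v) = f v := by
      rw [Submodule.mkQ_apply, Submodule.liftQ_apply]
  · intro h0
    apply hq.right
    refine hginj (?_ : gbar (p.mkQ v) = gbar 0)
    rw [map_zero, h2, h0]
  · rw [← h1, ← h2, ← hkey, hq.apply_eq_smul, map_smul]

end LAAux
section KeyStep

variable {k : Type*} [Field k] {V : Type*} [AddCommGroup V] [Module k V]
  [FiniteDimensional k V]

lemma eq_zero_of_vanish (ψ : Module.Dual k V) {S : Set V}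
    (hspan : Submodule.span k S = ⊤) (h : ∀ x ∈ S, ψ x = 0) : ψ = 0 := by
  have : Submodule.span k S ≤ LinearMap.ker ψ := Submodule.span_le.mpr h
  rw [hspan, top_le_iff] at this
  exact LinearMap.ker_eq_top.mp this

lemma keystep [IsAlgClosed k] {b c : ℕ} (hc : c ≤ 2)
    (G : Fin c → (V →ₗ[k] Module.Dual k V))
    (hsym : ∀ i v w, G i v w = G i w v)
    (β : Fin c → Fin b → V)
    (hrel : ∀ j, ∑ i, G i (β i j) = 0)
    (hspan : ∀ lam : Fin c → k, lam ≠ 0 →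
      ∀ ψ : Module.Dual k V, (∀ j, ψ (∑ i, lam i • β i j) = 0) → ψ = 0)
    (i : Fin c) : G i = 0 := by
  match c, hc with
  | 0, _ => exact absurd i.2 (by omega)
  | (m+3), h => exact absurd h (by omega)
  | 1, _ =>
    have hf : G 0 = 0 := by
      refine LinearMap.ext fun w => ?_
      rw [LinearMap.zero_apply]
      refine hspan ![1] (fun h => one_ne_zero (congrFun h 0)) (G 0 w) fun j => ?_
      have h1 : (∑ i : Fin 1, (![1] : Fin 1 → k) i • β i j) = β 0 j := by
        simp [Fin.sum_univ_one]
      rw [h1, hsym 0 w (β 0 j)]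
      have := hrel j
      rw [Fin.sum_univ_one] at this
      rw [this]
      simp
    have hi : i = 0 := Subsingleton.elim i 0
    exact hi ▸ hf
  | 2, _ =>
    have hg : G 1 = 0 := by
      by_contra hg0
      by_cases hk : LinearMap.ker (G 1) ≤ LinearMap.ker (G 0)
      · obtain ⟨γ, v, hgv, hfv⟩ := pencil_lemma (G 0) (G 1) (hsym 0) (hsym 1) hk hg0
        refine hgv (?_ : G 1 v = 0)
        refine hspan ![γ, 1] (fun h => one_ne_zero (congrFun h 1)) (G 1 v) fun j => ?_
        have h1 : (∑ i : Fin 2, (![γ, 1] : Fin 2 → k) i • β i j)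
            = γ • β 0 j + β 1 j := by
          simp [Fin.sum_univ_two]
        rw [h1, map_add, map_smul]
        have hr := hrel j
        rw [Fin.sum_univ_two] at hr
        have hr0 : G 0 (β 0 j) = - G 1 (β 1 j) := by
          rw [eq_neg_iff_add_eq_zero]; exact hr
        have e1 : G 1 v (β 0 j) = G 1 (β 0 j) v := hsym 1 v (β 0 j)
        have e2 : G 1 v (β 1 j) = G 1 (β 1 j) v := hsym 1 v (β 1 j)
        have e3 : G 0 v (β 0 j) = G 0 (β 0 j) v := hsym 0 v (β 0 j)
        have e4 : G 0 v (β 0 j) = γ * G 1 v (β 0 j) := by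
          rw [hfv]; simp
        have e5 : G 1 (β 1 j) v = - G 0 (β 0 j) v := by rw [hr0]; simp
        have : γ • (G 1 v) (β 0 j) = γ * G 1 v (β 0 j) := rfl
        rw [this, ← e4, e2, e5, ← e3, e4, e1]
        ring
      · rw [SetLike.not_le_iff_exists] at hk
        obtain ⟨v, hv1, hv0⟩ := hk
        have hψ : G 0 v ≠ 0 := fun h => hv0 (LinearMap.mem_ker.mpr h)
        refine hψ (hspan ![1, 0] (fun h => one_ne_zero (congrFun h 0)) (G 0 v) fun j => ?_)
        have h1 : (∑ i : Fin 2, (![1, 0] : Fin 2 → k) i • β i j) = β 0 j := by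
          simp [Fin.sum_univ_two]
        rw [h1, hsym 0 v (β 0 j)]
        have hr := hrel j
        rw [Fin.sum_univ_two] at hr
        have hr0 : G 0 (β 0 j) = - G 1 (β 1 j) := by
          rw [eq_neg_iff_add_eq_zero]; exact hr
        rw [hr0]
        have : G 1 (β 1 j) v = G 1 v (β 1 j) := (hsym 1 v (β 1 j)).symm
        have hgv : G 1 v = 0 := LinearMap.mem_ker.mp hv1
        simp [this, hgv]
    have hf : G 0 = 0 := by
      refine LinearMap.ext fun w => ?_
      rw [LinearMap.zero_apply]
      refine hspan ![1, 0] (fun h => one_ne_zero (congrFun h 0)) (G 0 w) fun j => ?_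
      have h1 : (∑ i : Fin 2, (![1, 0] : Fin 2 → k) i • β i j) = β 0 j := by
        simp [Fin.sum_univ_two]
      rw [h1, hsym 0 w (β 0 j)]
      have hr := hrel j
      rw [Fin.sum_univ_two, hg] at hr
      simp only [LinearMap.zero_apply, add_zero] at hr
      rw [hr]
      simp
    fin_cases i
    · exact hf
    · exact hg

end KeyStep
section DimAux

variable {k : Type*} [Field k]

/-- monomial exponents of degree `m` correspond to `Sym (Fin N) m` -/
noncomputable def degreeSubtypeEquivSym (N m : ℕ) :
    {d : Fin N →₀ ℕ // d.degree = m} ≃ Sym (Fin N) m where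
  toFun d := ⟨Finsupp.toMultiset d.1, by rw [Finsupp.degree_eq_card, d.2]⟩
  invFun s := ⟨Multiset.toFinsupp s.1, by
    rw [← Finsupp.degree_eq_card, Multiset.toFinsupp_toMultiset]; exact s.2⟩
  left_inv d := by
    ext : 1
    exact Finsupp.toMultiset_toFinsupp d.1
  right_inv s := by
    ext : 1
    exact Multiset.toFinsupp_toMultiset s.1

noncomputable instance degreeSubtypeFintype (N m : ℕ) :
    Fintype {d : Fin N →₀ ℕ // d.degree = m} :=
  Fintype.ofEquiv _ (degreeSubtypeEquivSym N m).symm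

noncomputable instance degreeSetFintype (N m : ℕ) :
    Fintype {d : Fin N →₀ ℕ | d.degree = m} :=
  inferInstanceAs (Fintype {d : Fin N →₀ ℕ // d.degree = m})

lemma card_degreeSet (N m : ℕ) :
    Fintype.card {d : Fin N →₀ ℕ | d.degree = m} = Nat.multichoose N m := by
  have h1 : Fintype.card {d : Fin N →₀ ℕ | d.degree = m}
      = Fintype.card (Sym (Fin N) m) :=
    Fintype.card_congr (degreeSubtypeEquivSym N m)
  rw [h1, Sym.card_sym_eq_multichoose, Fintype.card_fin]

instance homog_finiteDimensional (N m : ℕ) :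
    FiniteDimensional k (MvPolynomial.homogeneousSubmodule (Fin N) k m) := by
  rw [MvPolynomial.homogeneousSubmodule_eq_finsupp_supported]
  exact Module.Finite.of_basis (MvPolynomial.basisRestrictSupport k _)

lemma finrank_homog (N m : ℕ) :
    Module.finrank k (MvPolynomial.homogeneousSubmodule (Fin N) k m)
      = Nat.multichoose N m := by
  rw [MvPolynomial.homogeneousSubmodule_eq_finsupp_supported, ← card_degreeSet N m]
  exact Module.finrank_eq_card_basis (MvPolynomial.basisRestrictSupport k _)

/-- linear equivalence between a pi submodule over `univ` and the product of submodules -/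
def piSubmoduleEquiv {R M : Type*} {ι : Type*} [Semiring R] [AddCommMonoid M] [Module R M]
    (p : ι → Submodule R M) :
    (Submodule.pi Set.univ p) ≃ₗ[R] ((i : ι) → p i) where
  toFun x i := ⟨x.1 i, x.2 i (Set.mem_univ i)⟩
  map_add' x y := rfl
  map_smul' r x := rfl
  invFun y := ⟨fun i => y i, fun i _ => (y i).2⟩
  left_inv x := rfl
  right_inv y := rfl

end DimAux
section MainAux

open MvPolynomial

lemma map_mulVecLin_eq {k : Type*} [Field k] [IsAlgClosed k] {n b c : ℕ} (hc2 : c ≤ 2)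
    (B : Matrix (Fin c) (Fin b) (MvPolynomial (Fin (n + 1)) k))
    (hB1 : ∀ i j, (B i j).IsHomogeneous 1)
    (hB2 : ∀ v : Fin (n + 1) → k, v ≠ 0 → (B.map (MvPolynomial.eval v)).rank = c) :
    Submodule.map (B.mulVecLin.restrictScalars k)
        (Submodule.pi Set.univ
          (fun _ : Fin b => MvPolynomial.homogeneousSubmodule (Fin (n + 1)) k 1))
      = Submodule.pi Set.univ
          (fun _ : Fin c => MvPolynomial.homogeneousSubmodule (Fin (n + 1)) k 2) := by
  set L := B.mulVecLin.restrictScalars k with hL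
  set U1 := Submodule.pi Set.univ
    (fun _ : Fin b => MvPolynomial.homogeneousSubmodule (Fin (n + 1)) k 1) with hU1
  set U2 := Submodule.pi Set.univ
    (fun _ : Fin c => MvPolynomial.homogeneousSubmodule (Fin (n + 1)) k 2) with hU2
  have hLapp : ∀ u : Fin b → MvPolynomial (Fin (n + 1)) k, L u = B.mulVec u := fun u => rfl
  have hle : Submodule.map L U1 ≤ U2 := by
    rintro w ⟨u, hu', rfl⟩
    have hu : u ∈ U1 := hu'
    rw [hU2, Submodule.mem_pi]
    intro i _
    rw [MvPolynomial.mem_homogeneousSubmodule]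
    have h0 : L u i = ∑ j, B i j * u j := by
      rw [hLapp u]
      simp [Matrix.mulVec, dotProduct]
    rw [h0]
    refine MvPolynomial.IsHomogeneous.sum _ _ _ fun j _ => ?_
    rw [hU1, Submodule.mem_pi] at hu
    have h5 := (hB1 i j).mul
      ((MvPolynomial.mem_homogeneousSubmodule _ _).mp (hu j (Set.mem_univ j)))
    exact h5
  refine le_antisymm hle ?_
  by_contra hnle
  obtain ⟨w0, hw0U2, hw0W⟩ := SetLike.not_le_iff_exists.mp hnle
  obtain ⟨F, hFw0, hFbot⟩ := Submodule.exists_dual_map_eq_bot_of_notMem hw0W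
    inferInstance
  have hFvanish : ∀ u ∈ U1, F (L u) = 0 := by
    intro u hu
    have h1 : F (L u) ∈ Submodule.map F (Submodule.map L U1) :=
      Submodule.mem_map_of_mem (Submodule.mem_map_of_mem hu)
    rwa [hFbot, Submodule.mem_bot] at h1
  set f : Fin c → (MvPolynomial (Fin (n + 1)) k →ₗ[k] k) :=
    fun i => F.comp (LinearMap.single k (fun _ => MvPolynomial (Fin (n + 1)) k) i) with hf
  have hFdec : ∀ w : Fin c → MvPolynomial (Fin (n + 1)) k, F w = ∑ i, f i (w i) := by
    intro w
    conv_lhs => rw [← Finset.univ_sum_single w]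
    rw [map_sum]
    rfl
  have hβ : ∀ i j, ∃ v, linForm v = B i j := fun i j => exists_linForm (hB1 i j)
  choose β hβ using hβ
  have hrel0 : ∀ (j : Fin b) (v : Fin (n + 1) → k),
      ∑ i, f i (B i j * linForm v) = 0 := by
    intro j v
    have hu : (Pi.single j (linForm v) : Fin b → MvPolynomial (Fin (n + 1)) k) ∈ U1 := by
      rw [hU1, Submodule.mem_pi]
      intro j' _
      rcases eq_or_ne j' j with rfl | hne
      · rw [Pi.single_eq_same]
        exact (MvPolynomial.mem_homogeneousSubmodule _ _).mpr (linForm_isHomogeneous v)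
      · rw [Pi.single_eq_of_ne hne]
        exact Submodule.zero_mem _
    have h1 := hFvanish _ hu
    have h2 : L (Pi.single j (linForm v)) = fun i => B i j * linForm v := by
      rw [hLapp, Matrix.mulVec_single]
      rfl
    rw [h2, hFdec] at h1
    exact h1
  set G : Fin c → ((Fin (n + 1) → k) →ₗ[k] Module.Dual k (Fin (n + 1) → k)) := fun i =>
    LinearMap.mk₂ k (fun v w => f i (linForm v * linForm w))
      (fun v v' w => by rw [linForm_add, add_mul, map_add])
      (fun a v w => by
        rw [linForm_smul, mul_assoc, ← MvPolynomial.smul_eq_C_mul, map_smul, smul_eq_mul])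
      (fun v w w' => by rw [linForm_add, mul_add, map_add])
      (fun a v w => by
        rw [linForm_smul, mul_left_comm, ← MvPolynomial.smul_eq_C_mul, map_smul, smul_eq_mul])
    with hG
  have hGapp : ∀ i v w, G i v w = f i (linForm v * linForm w) := fun i v w => rfl
  have hsymG : ∀ i v w, G i v w = G i w v := by
    intro i v w
    rw [hGapp, hGapp, mul_comm]
  have hrelG : ∀ j, ∑ i, G i (β i j) = 0 := by
    intro j
    refine LinearMap.ext fun w => ?_
    rw [LinearMap.sum_apply, LinearMap.zero_apply]
    have h3 : ∀ i, G i (β i j) w = f i (B i j * linForm w) := by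
      intro i
      rw [hGapp, hβ]
    simp_rw [h3]
    exact hrel0 j w
  have hspanG : ∀ lam : Fin c → k, lam ≠ 0 →
      ∀ ψ : Module.Dual k (Fin (n + 1) → k),
        (∀ j, ψ (∑ i, lam i • β i j) = 0) → ψ = 0 := by
    intro lam hlam ψ hψ
    set d : Fin b → (Fin (n + 1) → k) := fun j => ∑ i, lam i • β i j with hd
    have hdot : ∀ v : Fin (n + 1) → k, v ≠ 0 → ∃ j, ∑ i', d j i' * v i' ≠ 0 := by
      intro v hv
      have hvm := vecMul_ne_zero_of_rank _ (hB2 v hv) hlam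
      rw [Function.ne_iff] at hvm
      obtain ⟨j, hj⟩ := hvm
      refine ⟨j, ?_⟩
      have e1 : ∑ i', d j i' * v i' = MvPolynomial.eval v (linForm (d j)) :=
        (eval_linForm _ _).symm
      have e2 : linForm (d j) = ∑ i, MvPolynomial.C (lam i) * B i j := by
        rw [hd, linForm_sum]
        exact Finset.sum_congr rfl fun i _ => by rw [linForm_smul, hβ]
      have e3 : MvPolynomial.eval v (linForm (d j))
          = ∑ i, lam i * MvPolynomial.eval v (B i j) := by
        rw [e2, map_sum]
        exact Finset.sum_congr rfl fun i _ => by simp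
      rw [e1, e3]
      simpa [Matrix.vecMul, dotProduct, Matrix.map_apply] using hj
    have hspan := span_top_of_dot d hdot
    refine eq_zero_of_vanish ψ hspan ?_
    rintro x ⟨j, rfl⟩
    exact hψ j
  have hGzero := keystep hc2 G hsymG β hrelG hspanG
  have hfvanish : ∀ i, ∀ q : MvPolynomial (Fin (n + 1)) k, q.IsHomogeneous 2 → f i q = 0 := by
    intro i q hq
    have hsubset : {q : MvPolynomial (Fin (n + 1)) k |
        ∃ a b', q = MvPolynomial.X a * MvPolynomial.X b'}
        ⊆ (LinearMap.ker (f i) : Set (MvPolynomial (Fin (n + 1)) k)) := by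
      rintro _ ⟨a, b', rfl⟩
      have h1 : (MvPolynomial.X a : MvPolynomial (Fin (n + 1)) k) * MvPolynomial.X b'
          = linForm (Pi.single a 1) * linForm (Pi.single b' 1) := by
        rw [linForm_single, linForm_single]
      show f i _ = 0
      rw [h1, ← hGapp, hGzero i]
      simp
    exact Submodule.span_le.mpr hsubset (isHomog_two_mem_span hq)
  apply hFw0
  rw [hFdec]
  refine Finset.sum_eq_zero fun i _ => ?_
  refine hfvanish i _ ?_
  rw [hU2, Submodule.mem_pi] at hw0U2
  exact (MvPolynomial.mem_homogeneousSubmodule _ _).mp (hw0U2 i (Set.mem_univ i))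

end MainAux
/-- if `B` is a `c × b` matrix of linear forms in `k[x_0,…,x_n]` with
`1 ≤ c ≤ 2` whose evaluation at every nonzero point has rank `c`, then multiplication by
`B` maps `b`-tuples of linear forms onto `c`-tuples of quadratic forms, and the kernel of
this `k`-linear map has dimension `b(n+1) − c·(n+1)(n+2)/2`. -/
theorem mulVec_linear_forms_surjective (k : Type*) [Field k] [IsAlgClosed k]
    (n b c : ℕ) (hn : 1 ≤ n) (hb : 1 ≤ b) (hc1 : 1 ≤ c) (hc2 : c ≤ 2)
    (B : Matrix (Fin c) (Fin b) (MvPolynomial (Fin (n + 1)) k))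
    (hB1 : ∀ i j, (B i j).IsHomogeneous 1)
    (hB2 : ∀ v : Fin (n + 1) → k, v ≠ 0 → (B.map (MvPolynomial.eval v)).rank = c) :
    (∀ w : Fin c → MvPolynomial (Fin (n + 1)) k, (∀ i, (w i).IsHomogeneous 2) →
      ∃ u : Fin b → MvPolynomial (Fin (n + 1)) k,
        (∀ j, (u j).IsHomogeneous 1) ∧ B.mulVec u = w) ∧
    Module.finrank k
      ↥(LinearMap.ker (B.mulVecLin.restrictScalars k) ⊓
        Submodule.pi Set.univ
          (fun _ : Fin b => MvPolynomial.homogeneousSubmodule (Fin (n + 1)) k 1))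
      = b * (n + 1) - c * ((n + 1) * (n + 2) / 2) := by
  classical
  set L := B.mulVecLin.restrictScalars k with hL
  set U1 := Submodule.pi Set.univ
    (fun _ : Fin b => MvPolynomial.homogeneousSubmodule (Fin (n + 1)) k 1) with hU1
  set U2 := Submodule.pi Set.univ
    (fun _ : Fin c => MvPolynomial.homogeneousSubmodule (Fin (n + 1)) k 2) with hU2
  have hmap : Submodule.map L U1 = U2 := map_mulVecLin_eq hc2 B hB1 hB2
  constructor
  · intro w hw
    have hwU2 : w ∈ U2 := by
      rw [hU2, Submodule.mem_pi]
      intro i _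
      exact (MvPolynomial.mem_homogeneousSubmodule _ _).mpr (hw i)
    rw [← hmap] at hwU2
    obtain ⟨u, huU1, hLu⟩ := hwU2
    have huU1' : u ∈ U1 := huU1
    rw [hU1, Submodule.mem_pi] at huU1'
    refine ⟨u, fun j => (MvPolynomial.mem_homogeneousSubmodule _ _).mp
      (huU1' j (Set.mem_univ j)), ?_⟩
    rw [← hLu]
    rfl
  · haveI h1 : FiniteDimensional k U1 :=
      Module.Finite.equiv (piSubmoduleEquiv
        (fun _ : Fin b => MvPolynomial.homogeneousSubmodule (Fin (n + 1)) k 1)).symm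
    set φ := L.comp U1.subtype with hφ
    have hrange : LinearMap.range φ = U2 := by
      rw [hφ, LinearMap.range_comp, Submodule.range_subtype, hmap]
    have hkerφ : LinearMap.ker φ = Submodule.comap U1.subtype (LinearMap.ker L ⊓ U1) := by
      rw [hφ, LinearMap.ker_comp]
      ext x
      simp only [Submodule.mem_comap, LinearMap.mem_ker, Submodule.mem_inf,
        Submodule.coe_subtype]
      exact ⟨fun h => ⟨h, x.2⟩, fun h => h.1⟩
    have e1 : Module.finrank k (LinearMap.ker φ)
        = Module.finrank k (LinearMap.ker L ⊓ U1 : Submodule k _) := by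
      rw [hkerφ]
      exact (Submodule.comapSubtypeEquivOfLe inf_le_right).finrank_eq
    have e2 : Module.finrank k U1 = b * (n + 1) := by
      rw [(piSubmoduleEquiv _).finrank_eq, Module.finrank_pi_fintype]
      simp [finrank_homog, Nat.multichoose_one_right]
    have e3 : Module.finrank k U2 = c * ((n + 1) * (n + 2) / 2) := by
      rw [(piSubmoduleEquiv _).finrank_eq, Module.finrank_pi_fintype]
      have hm : Nat.multichoose (n + 1) 2 = (n + 1) * (n + 2) / 2 := by
        rw [Nat.multichoose_eq]
        have : n + 1 + 2 - 1 = n + 2 := by omega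
        rw [this, Nat.choose_two_right]
        have : n + 2 - 1 = n + 1 := by omega
        rw [this, Nat.mul_comm]
      simp [finrank_homog, hm]
    have e4 := LinearMap.finrank_range_add_finrank_ker φ
    rw [hrange, e3, e2, e1] at e4
    omega
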